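/- For 0 < θ < π define Λ_θ(η) = sin(θ + 2η)/cos η on [0, (π − θ)/2]. If 0 < θ < π/2, then Λ_θ is strictly monotone increasing on [0, (π/2 − θ)/3] and strictly monotone decreasing on [π/2 − θ, (π − θ)/2], with Λ_θ((π/2 − θ)/3) ≥ 1 and Λ_θ(π/2 − θ) = 1. If π/2 ≤ θ < π, then Λ_θ is strictly monotone decreasing on [0, (π − θ)/2], with Λ_θ(0) = sin θ and Λ_θ((π − θ)/2) = 0. -/

import Mathlib

open Real Set

lemma numer_eq (a x : ℝ) :
    Real.cos (a + x) * 2 * Real.cos x - Real.sin (a + x) * -Real.sin x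
      = (Real.cos (a + 2 * x) + 3 * Real.cos a) / 2 := by
  rw [Real.cos_add, Real.sin_add, Real.cos_add a (2 * x), Real.cos_two_mul, Real.sin_two_mul]
  linear_combination Real.cos a * (Real.sin_sq_add_cos_sq x)

lemma hasDeriv (θ x : ℝ) (hx : Real.cos x ≠ 0) :
    HasDerivAt (fun η => Real.sin (θ + 2 * η) / Real.cos η)
      ((Real.cos (θ + 3 * x) + 3 * Real.cos (θ + x)) / 2 / (Real.cos x) ^ 2) x := by
  have h1 : HasDerivAt (fun η : ℝ => θ + 2 * η) 2 x := by
    simpa using ((hasDerivAt_id x).const_mul 2).const_add θ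
  have h2 : HasDerivAt (fun η : ℝ => Real.sin (θ + 2 * η)) (Real.cos (θ + 2 * x) * 2) x :=
    by have := (Real.hasDerivAt_sin (θ + 2 * x)).comp x h1; exact this
  have h3 := Real.hasDerivAt_cos x
  have h := h2.div h3 hx
  refine h.congr_deriv ?_
  rw [show θ + 3 * x = (θ + x) + 2 * x by ring, show θ + 2 * x = (θ + x) + x by ring,
    ← numer_eq (θ + x) x]

lemma contOn (θ a b : ℝ) (hb : b < Real.pi / 2) (ha : 0 ≤ a) :
    ContinuousOn (fun η => Real.sin (θ + 2 * η) / Real.cos η) (Set.Icc a b) := by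
  apply ContinuousOn.div
  · exact (Real.continuous_sin.comp (by continuity)).continuousOn
  · exact Real.continuous_cos.continuousOn
  · intro x hx
    have : Real.cos x > 0 := Real.cos_pos_of_mem_Ioo
      ⟨by nlinarith [Real.pi_pos, hx.1], lt_of_le_of_lt hx.2 hb⟩
    exact ne_of_gt this

theorem stmt13 (θ : ℝ) (hθ0 : 0 < θ) (hθπ : θ < Real.pi) :
    (θ < Real.pi / 2 →
      StrictMonoOn (fun η => Real.sin (θ + 2 * η) / Real.cos η)
        (Set.Icc 0 ((Real.pi / 2 - θ) / 3)) ∧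
      StrictAntiOn (fun η => Real.sin (θ + 2 * η) / Real.cos η)
        (Set.Icc (Real.pi / 2 - θ) ((Real.pi - θ) / 2)) ∧
      1 ≤ Real.sin (θ + 2 * ((Real.pi / 2 - θ) / 3)) / Real.cos ((Real.pi / 2 - θ) / 3) ∧
      Real.sin (θ + 2 * (Real.pi / 2 - θ)) / Real.cos (Real.pi / 2 - θ) = 1) ∧
    (Real.pi / 2 ≤ θ →
      StrictAntiOn (fun η => Real.sin (θ + 2 * η) / Real.cos η)
        (Set.Icc 0 ((Real.pi - θ) / 2)) ∧
      Real.sin (θ + 2 * (0 : ℝ)) / Real.cos (0 : ℝ) = Real.sin θ ∧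
      Real.sin (θ + 2 * ((Real.pi - θ) / 2)) / Real.cos ((Real.pi - θ) / 2) = 0) := by
  have hπ := Real.pi_pos
  constructor
  · intro hθ
    refine ⟨?_, ?_, ?_, ?_⟩
    · -- strict mono on [0, (π/2-θ)/3]
      apply strictMonoOn_of_deriv_pos (convex_Icc _ _)
        (contOn θ 0 ((Real.pi / 2 - θ) / 3) (by linarith) le_rfl)
      intro x hx
      rw [interior_Icc] at hx
      have hx1 : 0 < x := hx.1
      have hx2 : x < (Real.pi / 2 - θ) / 3 := hx.2
      have hcx : 0 < Real.cos x := Real.cos_pos_of_mem_Ioo ⟨by linarith, by linarith⟩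
      rw [(hasDeriv θ x (ne_of_gt hcx)).deriv]
      have h1 : 0 < Real.cos (θ + 3 * x) :=
        Real.cos_pos_of_mem_Ioo ⟨by linarith, by linarith⟩
      have h2 : 0 < Real.cos (θ + x) :=
        Real.cos_pos_of_mem_Ioo ⟨by linarith, by linarith⟩
      positivity
    · -- strict anti on [π/2-θ, (π-θ)/2]
      apply strictAntiOn_of_deriv_neg (convex_Icc _ _)
        (contOn θ (Real.pi / 2 - θ) ((Real.pi - θ) / 2) (by linarith) (by linarith))
      intro x hx
      rw [interior_Icc] at hx
      have hx1 : Real.pi / 2 - θ < x := hx.1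
      have hx2 : x < (Real.pi - θ) / 2 := hx.2
      have hcx : 0 < Real.cos x := Real.cos_pos_of_mem_Ioo ⟨by linarith, by linarith⟩
      rw [(hasDeriv θ x (ne_of_gt hcx)).deriv]
      have h1 : Real.cos (θ + 3 * x) < 0 :=
        Real.cos_neg_of_pi_div_two_lt_of_lt (by linarith) (by linarith)
      have h2 : Real.cos (θ + x) < 0 :=
        Real.cos_neg_of_pi_div_two_lt_of_lt (by linarith) (by linarith)
      have hsq : 0 < (Real.cos x) ^ 2 := by positivity
      exact div_neg_of_neg_of_pos (by linarith) hsq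
    · -- value at (π/2-θ)/3 is exactly 1
      rw [show θ + 2 * ((Real.pi / 2 - θ) / 3) = (Real.pi + θ) / 3 by ring,
        show (Real.pi / 2 - θ) / 3 = Real.pi / 2 - (Real.pi + θ) / 3 by ring,
        Real.cos_pi_div_two_sub]
      have : 0 < Real.sin ((Real.pi + θ) / 3) :=
        Real.sin_pos_of_pos_of_lt_pi (by linarith) (by linarith)
      rw [div_self (ne_of_gt this)]
    · rw [show θ + 2 * (Real.pi / 2 - θ) = Real.pi - θ by ring, Real.sin_pi_sub,
        Real.cos_pi_div_two_sub]
      exact div_self (ne_of_gt (Real.sin_pos_of_pos_of_lt_pi hθ0 hθπ))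
  · intro hθ
    refine ⟨?_, ?_, ?_⟩
    · apply strictAntiOn_of_deriv_neg (convex_Icc _ _)
        (contOn θ 0 ((Real.pi - θ) / 2) (by linarith) le_rfl)
      intro x hx
      rw [interior_Icc] at hx
      have hx1 : 0 < x := hx.1
      have hx2 : x < (Real.pi - θ) / 2 := hx.2
      have hcx : 0 < Real.cos x := Real.cos_pos_of_mem_Ioo ⟨by linarith, by linarith⟩
      rw [(hasDeriv θ x (ne_of_gt hcx)).deriv]
      have h1 : Real.cos (θ + 3 * x) < 0 :=
        Real.cos_neg_of_pi_div_two_lt_of_lt (by linarith) (by linarith)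
      have h2 : Real.cos (θ + x) < 0 :=
        Real.cos_neg_of_pi_div_two_lt_of_lt (by linarith) (by linarith)
      have hsq : 0 < (Real.cos x) ^ 2 := by positivity
      exact div_neg_of_neg_of_pos (by linarith) hsq
    · simp
    · rw [show θ + 2 * ((Real.pi - θ) / 2) = Real.pi by ring, Real.sin_pi, zero_div]
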